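/- Let X ⊆ ℝ² be a closed set and let A ⊆ ℝ² be a subset for which there exists a homeomorphism h from the closed annulus {x ∈ ℝ² : 1 ≤ ‖x‖₂ ≤ 2} onto A (with their subspace topologies) such that X ∩ A = h({x ∈ ℝ² : ‖x‖₂ = 2}), the image of the outer boundary circle. Then X ∪ A strongly deformation retracts onto X. (This is Case 2 of the proof of the main proposition: an annulus-shaped false-positive region glued to X along one boundary circle can be pushed through the annulus onto X.) -/

import Mathlib

open Set Metric

noncomputable section

/-- The plane modeled as `Fin 2 → ℝ` with the Pi (sup) norm. -/
abbrev Plane : Type := Fin 2 → ℝ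

/-- The Euclidean plane (for Euclidean-norm disks and annuli). -/
abbrev EPlane : Type := EuclideanSpace ℝ (Fin 2)

/-- The closed unit pixel `[i-1,i] × [j-1,j]` for a pixel index `(i,j)`. -/
def pixel (p : ℕ × ℕ) : Set Plane :=
  {x | x 0 ∈ Set.Icc ((p.1 : ℝ) - 1) (p.1 : ℝ) ∧ x 1 ∈ Set.Icc ((p.2 : ℝ) - 1) (p.2 : ℝ)}

/-- A binary image `S` lies on the `h × w` grid `{1,…,h} × {1,…,w}`. -/
def OnGrid (S : Set (ℕ × ℕ)) (h w : ℕ) : Prop :=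
  S ⊆ Set.Icc 1 h ×ˢ Set.Icc 1 w

/-- The foreground `F(S)` of a binary image. -/
def fg (S : Set (ℕ × ℕ)) : Set Plane := ⋃ p ∈ S, pixel p

/-- Closed `ε`-thickening `D_ε(X)` with respect to the sup norm. -/
def thick (ε : ℝ) (X : Set Plane) : Set Plane := {y | ∃ x ∈ X, ‖x - y‖ ≤ ε}

/-- `C` is a connected component of `A` (as a subset of the plane). -/
def IsCompOf (C A : Set Plane) : Prop := ∃ x ∈ A, C = connectedComponentIn A x

/-- Two subsets share a boundary edge if their closures intersect in an infinite set. -/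
def SharesEdge (C D : Set Plane) : Prop := (closure C ∩ closure D).Infinite

/-- `X` strongly deformation retracts onto `A`. -/
def SDR (X A : Set Plane) : Prop :=
  ∃ H : C(↥X × unitInterval, ↥X),
    (∀ x, H (x, 0) = x) ∧ (∀ x, ((H (x, 1) : Plane)) ∈ A) ∧
    (∀ a : ↥X, (a : Plane) ∈ A → ∀ t, H (a, t) = a)

def TPset (P G : Set (ℕ × ℕ)) (ε : ℝ) : Set Plane := thick ε (fg P) ∩ thick (2 * ε) (fg G)
def TNset (P G : Set (ℕ × ℕ)) (ε : ℝ) : Set Plane := (thick ε (fg P))ᶜ ∩ (thick (2 * ε) (fg G))ᶜ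
def FPset (P G : Set (ℕ × ℕ)) (ε : ℝ) : Set Plane := thick ε (fg P) ∩ (thick (2 * ε) (fg G))ᶜ
def FNset (P G : Set (ℕ × ℕ)) (ε : ℝ) : Set Plane := (thick ε (fg P))ᶜ ∩ thick (2 * ε) (fg G)

/-- A component `C` (of `FP` or `FN`) is regular: exactly one component of `TP` and exactly
one component of `TN` share a boundary edge with it. -/
def RegularComp (P G : Set (ℕ × ℕ)) (ε : ℝ) (C : Set Plane) : Prop :=
  (∃! T : Set Plane, IsCompOf T (TPset P G ε) ∧ SharesEdge T C) ∧
  (∃! T : Set Plane, IsCompOf T (TNset P G ε) ∧ SharesEdge T C)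

/-- The zero-loss hypothesis: every component of `FP` and every component of `FN` is regular. -/
def ZeroLoss (P G : Set (ℕ × ℕ)) (ε : ℝ) : Prop :=
  (∀ C : Set Plane, IsCompOf C (FPset P G ε) → RegularComp P G ε C) ∧
  (∀ C : Set Plane, IsCompOf C (FNset P G ε) → RegularComp P G ε C)


/-- Pasting lemma for a closed cover. -/
lemma continuous_of_closed_cover {α β : Type*} [TopologicalSpace α] [TopologicalSpace β]
    {s t : Set α} {f : α → β} (hs : IsClosed s) (ht : IsClosed t) (hcov : s ∪ t = univ)
    (h1 : ContinuousOn f s) (h2 : ContinuousOn f t) : Continuous f := by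
  rw [continuous_iff_isClosed]
  intro c hc
  have : f ⁻¹' c = (s ∩ f ⁻¹' c) ∪ (t ∩ f ⁻¹' c) := by
    rw [← union_inter_distrib_right, hcov, univ_inter]
  rw [this]
  exact (h1.preimage_isClosed_of_isClosed hs hc).union
    (h2.preimage_isClosed_of_isClosed ht hc)

abbrev Ann : Set EPlane := {x : EPlane | 1 ≤ ‖x‖ ∧ ‖x‖ ≤ 2}

def annScalar (x : EPlane) (t : ℝ) : ℝ := (1 - t) + 2 * t / ‖x‖

lemma norm_annScalar_smul {x : EPlane} (hx : x ∈ Ann) {t : ℝ} (ht : t ∈ unitInterval) :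
    ‖annScalar x t • x‖ = (1 - t) * ‖x‖ + 2 * t := by
  obtain ⟨hx1, hx2⟩ := hx
  have hxpos : (0:ℝ) < ‖x‖ := lt_of_lt_of_le one_pos hx1
  have hscal : 0 ≤ annScalar x t := by
    have : 0 ≤ 2 * t / ‖x‖ := div_nonneg (by linarith [ht.1]) hxpos.le
    have := ht.2
    unfold annScalar; linarith
  rw [norm_smul, Real.norm_eq_abs, abs_of_nonneg hscal]
  unfold annScalar
  field_simp

lemma annScalar_smul_mem {x : EPlane} (hx : x ∈ Ann) {t : ℝ} (ht : t ∈ unitInterval) :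
    annScalar x t • x ∈ Ann := by
  obtain ⟨hx1, hx2⟩ := hx
  rw [Ann, mem_setOf_eq, norm_annScalar_smul ⟨hx1, hx2⟩ ht]
  constructor <;> nlinarith [ht.1, ht.2]

def annRet (p : ↥Ann × unitInterval) : ↥Ann :=
  ⟨annScalar p.1.1 p.2 • p.1.1, annScalar_smul_mem p.1.2 p.2.2⟩

lemma continuous_annRet : Continuous annRet := by
  apply Continuous.subtype_mk
  apply Continuous.fun_smul
  · unfold annScalar
    apply Continuous.add
    · exact continuous_const.sub (continuous_subtype_val.comp continuous_snd)
    · apply Continuous.div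
      · exact continuous_const.mul (continuous_subtype_val.comp continuous_snd)
      · exact (continuous_norm.comp (continuous_subtype_val.comp continuous_fst))
      · intro p
        exact ne_of_gt (lt_of_lt_of_le one_pos p.1.2.1)
  · exact continuous_subtype_val.comp continuous_fst

lemma annRet_zero (x : ↥Ann) : annRet (x, 0) = x := by
  apply Subtype.ext
  show annScalar x.1 ((0 : unitInterval) : ℝ) • x.1 = x.1
  have : annScalar x.1 ((0 : unitInterval) : ℝ) = 1 := by
    simp [annScalar]
  rw [this, one_smul]

lemma norm_annRet_one (x : ↥Ann) : ‖(annRet (x, 1) : EPlane)‖ = 2 := by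
  show ‖annScalar x.1 _ • x.1‖ = 2
  rw [norm_annScalar_smul x.2 (by norm_num : ((1:unitInterval):ℝ) ∈ unitInterval)]
  norm_num

lemma annRet_fixed (x : ↥Ann) (hx : ‖(x : EPlane)‖ = 2) (t : unitInterval) :
    annRet (x, t) = x := by
  apply Subtype.ext
  show annScalar x.1 t • x.1 = x.1
  have : annScalar x.1 t = 1 := by
    rw [annScalar, hx]; ring
  rw [this, one_smul]

lemma isCompact_Ann : IsCompact Ann := by
  have hcl : IsClosed Ann := by
    have : Ann = (fun x : EPlane => ‖x‖) ⁻¹' (Icc 1 2) := by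
      ext x; simp [Ann, mem_Icc]
    rw [this]
    exact isClosed_Icc.preimage continuous_norm
  have hbd : Bornology.IsBounded Ann := by
    apply (Metric.isBounded_closedBall (x := (0:EPlane)) (r := 2)).subset
    intro x hx
    simpa [mem_closedBall, dist_eq_norm] using hx.2
  exact Metric.isCompact_of_isClosed_isBounded hcl hbd


/-- If a closed set `X ⊆ ℝ²` meets a topological closed annulus `A` exactly
in the image of the outer boundary circle, then `X ∪ A` strongly deformation retracts
onto `X`. -/
theorem union_with_annulus_glued_along_outer_circle_deformation_retracts
    (X A : Set Plane) (hX : IsClosed X)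
    (e : ↥{x : EPlane | 1 ≤ ‖x‖ ∧ ‖x‖ ≤ 2} ≃ₜ ↥A)
    (hXA : ∀ a : ↥A, ((a : Plane) ∈ X ↔
      ‖((e.symm a : ↥{x : EPlane | 1 ≤ ‖x‖ ∧ ‖x‖ ≤ 2}) : EPlane)‖ = 2)) :
    SDR (X ∪ A) X := by
  classical
  haveI hAnnComp : CompactSpace ↥Ann := isCompact_iff_compactSpace.mp isCompact_Ann
  have hAcomp : IsCompact A := isCompact_iff_compactSpace.mpr e.compactSpace
  have hAclosed : IsClosed A := hAcomp.isClosed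
  set g : ↥A × unitInterval → Plane :=
    fun p => ((e (annRet (e.symm p.1, p.2)) : ↥A) : Plane) with hgdef
  have hg : Continuous g := by
    apply continuous_subtype_val.comp
    apply e.continuous.comp
    apply continuous_annRet.comp
    exact (e.symm.continuous.comp continuous_fst).prodMk continuous_snd
  have hfix : ∀ (a : Plane) (h : a ∈ A), a ∈ X → ∀ t : unitInterval, g (⟨a, h⟩, t) = a := by
    intro a h ha t
    have hn : ‖((e.symm ⟨a, h⟩ : ↥Ann) : EPlane)‖ = 2 := (hXA ⟨a, h⟩).mp ha
    simp only [hgdef]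
    rw [annRet_fixed _ hn, e.apply_symm_apply]
  set F : ↥(X ∪ A) × unitInterval → Plane :=
    fun p => if h : ((p.1 : Plane) ∈ A) then g (⟨p.1, h⟩, p.2) else (p.1 : Plane) with hFdef
  set s : Set (↥(X ∪ A) × unitInterval) := {p | (p.1 : Plane) ∈ A} with hsdef
  set c : Set (↥(X ∪ A) × unitInterval) := {p | (p.1 : Plane) ∈ X} with hcdef
  have hs : IsClosed s := hAclosed.preimage (continuous_subtype_val.comp continuous_fst)
  have hc : IsClosed c := hX.preimage (continuous_subtype_val.comp continuous_fst)
  have hcov : s ∪ c = univ := by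
    ext p
    simp only [hsdef, hcdef, mem_union, mem_setOf_eq, mem_univ, iff_true]
    rcases p.1.2 with h | h
    · exact Or.inr h
    · exact Or.inl h
  have h1 : ContinuousOn F s := by
    rw [continuousOn_iff_continuous_restrict]
    have hres : s.restrict F = fun q : ↥s => g (⟨(q.1.1 : Plane), q.2⟩, q.1.2) := by
      funext q
      simp only [restrict_apply, hFdef]
      exact dif_pos q.2
    rw [show s.domRestrict F = s.restrict F from rfl, hres]
    apply hg.comp
    apply Continuous.prodMk
    · exact Continuous.subtype_mk
        (continuous_subtype_val.comp (continuous_fst.comp continuous_subtype_val)) _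
    · exact continuous_snd.comp continuous_subtype_val
  have h2 : ContinuousOn F c := by
    apply ContinuousOn.congr
      ((continuous_subtype_val.comp continuous_fst).continuousOn : ContinuousOn (fun p : ↥(X ∪ A) × unitInterval => (p.1 : Plane)) c)
    intro p hp
    simp only [hFdef]
    by_cases h : (p.1 : Plane) ∈ A
    · rw [dif_pos h, hfix _ h hp]; rfl
    · rw [dif_neg h]; rfl
  have hFcont : Continuous F := continuous_of_closed_cover hs hc hcov h1 h2
  have hmem : ∀ p, F p ∈ X ∪ A := by
    intro p
    simp only [hFdef]
    by_cases h : (p.1 : Plane) ∈ A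
    · rw [dif_pos h]
      exact Or.inr (Subtype.mem _)
    · rw [dif_neg h]
      exact p.1.2
  refine ⟨⟨fun p => ⟨F p, hmem p⟩, hFcont.subtype_mk _⟩, ?_, ?_, ?_⟩
  · intro x
    apply Subtype.ext
    show F (x, 0) = (x : Plane)
    simp only [hFdef]
    by_cases h : (x : Plane) ∈ A
    · rw [dif_pos h]
      simp only [hgdef]
      rw [annRet_zero, e.apply_symm_apply]
    · rw [dif_neg h]
  · intro x
    show F (x, 1) ∈ X
    simp only [hFdef]
    by_cases h : (x : Plane) ∈ A
    · rw [dif_pos h]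
      simp only [hgdef]
      apply (hXA _).mpr
      rw [e.symm_apply_apply]
      exact norm_annRet_one _
    · rw [dif_neg h]
      rcases x.2 with hx | hx
      · exact hx
      · exact absurd hx h
  · intro a ha t
    apply Subtype.ext
    show F (a, t) = (a : Plane)
    simp only [hFdef]
    by_cases h : (a : Plane) ∈ A
    · rw [dif_pos h, hfix _ h ha]
    · rw [dif_neg h]


end
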